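/- Let G be a chordal graph on n vertices which has a maximal clique with t+1 vertices for some t ≥ 1. Then c(G) ≤ n − t. -/

import Mathlib

/-- `G` has an induced cycle of length `n`, i.e. an injective map from `ZMod n` to the
vertices such that images are adjacent exactly when the indices are consecutive. -/
def SimpleGraph.HasInducedCycle {V : Type*} (G : SimpleGraph V) (n : ℕ) : Prop :=
  ∃ f : ZMod n → V, Function.Injective f ∧
    ∀ i j : ZMod n, G.Adj (f i) (f j) ↔ (j = i + 1 ∨ i = j + 1)

/-- A graph is chordal if it has no induced cycle of length greater than 3. -/
def SimpleGraph.Chordal {V : Type*} (G : SimpleGraph V) : Prop :=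
  ∀ n : ℕ, 4 ≤ n → ¬ G.HasInducedCycle n

/-- `c(G)`: the number of maximal cliques of a graph `G`. -/
noncomputable def numMaximalCliques {V : Type*} (G : SimpleGraph V) : ℕ :=
  {s : Set V | Maximal (fun t => G.IsClique t) s}.ncard

namespace SimpleGraph
namespace Walk

variable {V : Type*} {G : SimpleGraph V}

/-- The prefix of a walk, of length `n` (if `n ≤ p.length`). -/
def takeW {u v : V} : (p : G.Walk u v) → (n : ℕ) → G.Walk u (p.getVert n)
  | p, 0 => Walk.nil.copy rfl (p.getVert_zero).symm
  | Walk.nil, (n+1) => Walk.nil.copy rfl (by cases n <;> rfl)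
  | Walk.cons h q, (n+1) => Walk.cons h (q.takeW n)

lemma takeW_length {u v : V} : ∀ (p : G.Walk u v) (n : ℕ), n ≤ p.length →
    (p.takeW n).length = n := by
  intro p
  induction p with
  | nil =>
    intro n hn
    obtain rfl : n = 0 := by simpa using hn
    simp [takeW]
  | cons h q ih =>
    intro n hn
    cases n with
    | zero => simp [takeW]
    | succ n => simp only [takeW]; exact congrArg (· + 1) (ih n (by simpa using hn))

lemma takeW_support_subset {u v : V} : ∀ (p : G.Walk u v) (n : ℕ),
    (p.takeW n).support ⊆ p.support := by
  intro p
  induction p with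
  | nil => intro n; cases n <;> simp [takeW]
  | cons h q ih =>
    intro n
    cases n with
    | zero => simp [takeW]
    | succ n =>
      simp only [takeW, support_cons]
      intro x hx
      rcases List.mem_cons.1 hx with h1 | h1
      · simp [h1]
      · exact List.mem_cons_of_mem _ (ih n h1)

lemma drop_length' {u v : V} : ∀ (p : G.Walk u v) (n : ℕ), n ≤ p.length →
    (p.drop n).length = p.length - n := by
  intro p
  induction p with
  | nil =>
    intro n hn
    obtain rfl : n = 0 := by simpa using hn
    simp [Walk.drop]
  | cons h q ih =>
    intro n hn
    cases n with
    | zero => simp [drop]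
    | succ n => simp only [drop, length_copy, length_cons]
                exact (ih n (by simpa using hn)).trans (by omega)

lemma drop_support_subset {u v : V} : ∀ (p : G.Walk u v) (n : ℕ),
    (p.drop n).support ⊆ p.support := by
  intro p
  induction p with
  | nil => intro n; cases n with
    | zero => exact fun x hx => hx
    | succ m => exact fun x hx => hx
  | cons h q ih =>
    intro n
    cases n with
    | zero => simp [Walk.drop]
    | succ n =>
      simp only [drop, support_copy, support_cons]
      exact fun x hx => List.mem_cons_of_mem _ (ih n hx)

lemma getVert_mem_support' {u v : V} (p : G.Walk u v) (n : ℕ) :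
    p.getVert n ∈ p.support := by
  rcases le_or_gt n p.length with h | h
  · exact mem_support_iff_exists_getVert.2 ⟨n, rfl, h⟩
  · rw [p.getVert_of_length_le h.le]; exact p.end_mem_support

lemma IsPath.getVert_inj {u v : V} {p : G.Walk u v} (hp : p.IsPath) :
    ∀ {i j : ℕ}, i ≤ p.length → j ≤ p.length → p.getVert i = p.getVert j → i = j := by
  induction p with
  | nil => intro i j hi hj _; simp only [Walk.length_nil, Nat.le_zero] at hi hj; omega
  | cons h q ih =>
    intro i j hi hj hij
    have hpq : q.IsPath := hp.of_cons
    have hns : _ ∉ q.support := (cons_isPath_iff _ _ ).1 hp |>.2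
    match i, j with
    | 0, 0 => rfl
    | 0, (j+1) =>
      exfalso
      rw [getVert_zero, getVert_cons_succ] at hij
      exact hns (hij ▸ q.getVert_mem_support' j)
    | (i+1), 0 =>
      exfalso
      rw [getVert_zero, getVert_cons_succ] at hij
      exact hns (hij ▸ q.getVert_mem_support' i)
    | (i+1), (j+1) =>
      rw [getVert_cons_succ, getVert_cons_succ] at hij
      simp only [length_cons] at hi hj
      exact congrArg (·+1) (ih hpq (by omega) (by omega) hij)

end Walk

variable {V : Type*} {G : SimpleGraph V}

/-- From any walk whose support lies in a set `Q`, extract an induced (chordless) path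
with support in `Q`. -/
lemma exists_induced_path_in (Q : Set V) {x y : V} (p₀ : G.Walk x y)
    (h₀ : ∀ v ∈ p₀.support, v ∈ Q) :
    ∃ p : G.Walk x y, (∀ v ∈ p.support, v ∈ Q) ∧ p.IsPath ∧
      ∀ i j, i + 1 < j → j ≤ p.length → ¬ G.Adj (p.getVert i) (p.getVert j) := by
  classical
  let L : Set ℕ := {n | ∃ p : G.Walk x y, (∀ v ∈ p.support, v ∈ Q) ∧ p.length = n}
  have hL : L.Nonempty := ⟨p₀.length, p₀, h₀, rfl⟩
  obtain ⟨q, hq, hqlen⟩ : ∃ q : G.Walk x y, (∀ v ∈ q.support, v ∈ Q) ∧ q.length = sInf L :=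
    Nat.sInf_mem hL
  have hmin : ∀ r : G.Walk x y, (∀ v ∈ r.support, v ∈ Q) → q.length ≤ r.length := by
    intro r hr
    rw [hqlen]
    exact Nat.sInf_le ⟨r, hr, rfl⟩
  refine ⟨q.bypass, fun v hv => hq v (q.support_bypass_subset hv), q.bypass_isPath, ?_⟩
  have hbQ : ∀ v ∈ q.bypass.support, v ∈ Q := fun v hv => hq v (q.support_bypass_subset hv)
  have hblen : q.bypass.length = q.length :=
    le_antisymm q.length_bypass_le (hmin _ hbQ)
  intro i j hij hj hadj
  set P := q.bypass with hP
  -- shortcut walk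
  let r : G.Walk x y := (P.takeW i).append (Walk.cons hadj (P.drop j))
  have hrQ : ∀ v ∈ r.support, v ∈ Q := by
    intro v hv
    rw [Walk.mem_support_append_iff] at hv
    rcases hv with hv | hv
    · exact hbQ v (P.takeW_support_subset i hv)
    · rcases List.mem_cons.1 hv with hv | hv
      · exact hbQ _ (hv ▸ P.getVert_mem_support' i)
      · exact hbQ v (P.drop_support_subset j hv)
  have hrlen : r.length = i + 1 + (P.length - j) := by
    simp only [r, Walk.length_append, Walk.length_cons]
    rw [P.takeW_length i (by omega), P.drop_length' j hj]
    omega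
  have := hmin r hrQ
  rw [hrlen, ← hblen] at this
  omega


private lemma zmod_cast_val {n : ℕ} [NeZero n] (i : ZMod n) : ((i.val : ℕ) : ZMod n) = i := by
  rw [ZMod.natCast_val, ZMod.cast_id]

lemma hasInducedCycle_of_two_paths {x y : V} (p q : G.Walk x y)
    (hp : p.IsPath) (hq : q.IsPath) (hp2 : 2 ≤ p.length) (hq2 : 2 ≤ q.length)
    (hxy : ¬ G.Adj x y)
    (hpc : ∀ i j, i + 1 < j → j ≤ p.length → ¬ G.Adj (p.getVert i) (p.getVert j))
    (hqc : ∀ i j, i + 1 < j → j ≤ q.length → ¬ G.Adj (q.getVert i) (q.getVert j))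
    (hdisj : ∀ i j, 0 < i → i < p.length → 0 < j → j < q.length → p.getVert i ≠ q.getVert j)
    (hnadj : ∀ i j, 0 < i → i < p.length → 0 < j → j < q.length →
      ¬ G.Adj (p.getVert i) (q.getVert j)) :
    G.HasInducedCycle (p.length + q.length) := by
  set pl := p.length with hpl
  set ql := q.length with hql
  set n := pl + ql with hn
  have hn4 : 4 ≤ n := by omega
  haveI : NeZero n := ⟨by omega⟩
  haveI : Fact (1 < n) := ⟨by omega⟩
  set fN : ℕ → V := fun k => if k ≤ pl then p.getVert k else q.getVert (n - k) with hfN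
  have hq0 : q.getVert 0 = x := q.getVert_zero
  have hqL : q.getVert ql = y := q.getVert_length
  have hp0 : p.getVert 0 = x := p.getVert_zero
  have hpL : p.getVert pl = y := p.getVert_length
  -- ℕ-level injectivity
  have haux : ∀ a b : ℕ, a < n → b < n → a ≤ b → fN a = fN b → a = b := by
    intro a b han hbn hab hfab
    rcases le_or_gt b pl with hb | hb
    · simp only [hfN, if_pos (hab.trans hb), if_pos hb] at hfab
      exact hp.getVert_inj (hab.trans hb) hb hfab
    · have hjb1 : 0 < n - b := by omega
      have hjb2 : n - b < ql := by omega
      rcases le_or_gt a pl with ha | ha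
      · simp only [hfN, if_pos ha, if_neg (not_le.2 hb)] at hfab
        rcases Nat.eq_zero_or_pos a with rfl | ha0
        · have hfab' : q.getVert 0 = q.getVert (n - b) := by rw [hq0]; exact hp0.symm.trans hfab
          have := hq.getVert_inj (Nat.zero_le _) (by omega : n - b ≤ ql) hfab'
          omega
        · rcases eq_or_lt_of_le ha with rfl | ha'
          · have hfab' : q.getVert ql = q.getVert (n - b) := by rw [hqL]; exact hpL.symm.trans hfab
            have := hq.getVert_inj (le_refl ql) (by omega : n - b ≤ ql) hfab'
            omega
          · exact absurd hfab (hdisj a (n - b) ha0 ha' hjb1 hjb2)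
      · simp only [hfN, if_neg (not_le.2 ha), if_neg (not_le.2 hb)] at hfab
        have := hq.getVert_inj (by omega : n - a ≤ ql) (by omega : n - b ≤ ql) hfab
        omega
  have hinjN : ∀ a b : ℕ, a < n → b < n → fN a = fN b → a = b := by
    intro a b han hbn hfab
    rcases le_total a b with h | h
    · exact haux a b han hbn h hfab
    · exact (haux b a hbn han h hfab.symm).symm
  -- forward adjacency
  have hfwd : ∀ a b : ℕ, a < n → b < n → a < b → G.Adj (fN a) (fN b) →
      b = a + 1 ∨ (a = 0 ∧ b = n - 1) := by
    intro a b han hbn hab hadj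
    rcases le_or_gt b pl with hb | hb
    · simp only [hfN, if_pos (le_of_lt (lt_of_lt_of_le hab hb)), if_pos hb] at hadj
      by_cases h : a + 1 < b
      · exact absurd hadj (hpc a b h hb)
      · left; omega
    · have hjb1 : 0 < n - b := by omega
      have hjb2 : n - b < ql := by omega
      rcases le_or_gt a pl with ha | ha
      · simp only [hfN, if_pos ha, if_neg (not_le.2 hb)] at hadj
        rcases Nat.eq_zero_or_pos a with rfl | ha0
        · have hadj' : G.Adj (q.getVert 0) (q.getVert (n - b)) := by
            rw [hq0.trans hp0.symm]; exact hadj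
          by_cases h : 0 + 1 < n - b
          · exact absurd hadj' (hqc 0 (n - b) h (by omega))
          · right; constructor; · rfl
            omega
        · rcases eq_or_lt_of_le ha with rfl | ha'
          · have hadj' : G.Adj (q.getVert (n - b)) (q.getVert ql) := by
              rw [hqL.trans hpL.symm]; exact hadj.symm
            by_cases h : (n - b) + 1 < ql
            · exact absurd hadj' (hqc (n - b) ql h (le_refl _))
            · left; omega
          · exact absurd hadj (hnadj a (n - b) ha0 ha' hjb1 hjb2)
      · simp only [hfN, if_neg (not_le.2 ha), if_neg (not_le.2 hb)] at hadj
        by_cases h : (n - b) + 1 < n - a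
        · exact absurd hadj.symm (hqc (n - b) (n - a) h (by omega))
        · left; omega
  -- backward adjacency
  have hbwd1 : ∀ a : ℕ, a + 1 < n → G.Adj (fN a) (fN (a + 1)) := by
    intro a ha
    rcases le_or_gt (a + 1) pl with h | h
    · simp only [hfN, if_pos h, if_pos (by omega : a ≤ pl)]
      exact p.adj_getVert_succ (by omega)
    · have h1 : fN a = q.getVert (n - a) := by
        rcases le_or_gt a pl with h2 | h2
        · have : a = pl := by omega
          subst this
          simp only [hfN, if_pos (le_refl pl)]
          rw [show n - pl = ql from by omega, hqL]; exact hpL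
        · simp only [hfN, if_neg (not_le.2 h2)]
      have h2 : fN (a + 1) = q.getVert (n - a - 1) := by
        simp only [hfN, if_neg (not_le.2 h)]
        rw [show n - (a + 1) = n - a - 1 from by omega]
      rw [h1, h2]
      have : G.Adj (q.getVert (n - a - 1)) (q.getVert (n - a - 1 + 1)) :=
        q.adj_getVert_succ (by omega)
      have heq : n - a - 1 + 1 = n - a := by omega
      rw [heq] at this
      exact this.symm
  have hbwd2 : G.Adj (fN (n - 1)) (fN 0) := by
    have h1 : fN (n - 1) = q.getVert 1 := by
      simp only [hfN, if_neg (by omega : ¬ (n - 1 ≤ pl))]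
      congr 1
      omega
    have h2 : fN 0 = x := by
      show (if 0 ≤ pl then p.getVert 0 else q.getVert (n - 0)) = x
      rw [if_pos (Nat.zero_le _)]; exact hp0
    rw [h1, h2]
    have h3 := q.adj_getVert_succ (show 0 < ql from by omega)
    rw [hq0] at h3
    exact h3.symm
  -- assemble
  refine ⟨fun i => fN i.val, ?_, ?_⟩
  · intro i j hij
    exact ZMod.val_injective n (hinjN i.val j.val (ZMod.val_lt i) (ZMod.val_lt j) hij)
  · intro i j
    constructor
    · intro hadj
      have hne : i.val ≠ j.val := by
        intro h
        have hij : i = j := ZMod.val_injective n h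
        subst hij
        exact G.irrefl hadj
      have key : ∀ (a b : ZMod n), a.val < b.val → G.Adj (fN a.val) (fN b.val) →
          (b = a + 1 ∨ a = b + 1) := by
        intro a b hab hadj'
        rcases hfwd a.val b.val (ZMod.val_lt a) (ZMod.val_lt b) hab hadj' with h | ⟨h0, h1⟩
        · left
          have : b = ((a.val + 1 : ℕ) : ZMod n) := by rw [← h, zmod_cast_val]
          rw [this]
          push_cast
          rw [zmod_cast_val]
        · right
          have ha' : a = 0 := by
            have : a = ((0 : ℕ) : ZMod n) := by rw [← h0, zmod_cast_val]
            simpa using this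
          have hb' : b = ((n - 1 : ℕ) : ZMod n) := by rw [← h1, zmod_cast_val]
          rw [ha', hb']
          have : ((n - 1 : ℕ) : ZMod n) + 1 = ((n - 1 + 1 : ℕ) : ZMod n) := by push_cast; ring
          rw [this, Nat.sub_add_cancel (by omega : 1 ≤ n), ZMod.natCast_self]
      rcases lt_or_gt_of_ne hne with h | h
      · exact key i j h hadj
      · exact (key j i h hadj.symm).symm
    · intro hcons
      have step : ∀ a b : ZMod n, b = a + 1 → G.Adj (fN a.val) (fN b.val) := by
        intro a b hb
        have hbv : b.val = (a.val + 1) % n := by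
          rw [hb, ZMod.val_add, ZMod.val_one]
        rcases Nat.lt_or_ge (a.val + 1) n with h | h
        · rw [hbv, Nat.mod_eq_of_lt h]
          exact hbwd1 a.val h
        · have hav : a.val = n - 1 := by have := ZMod.val_lt a; omega
          have hbv' : b.val = 0 := by
            rw [hbv, show a.val + 1 = n from by omega, Nat.mod_self]
          rw [hav, hbv']
          exact hbwd2
      rcases hcons with h | h
      · exact step i j h
      · exact (step j i h).symm

end SimpleGraph
namespace SimpleGraph

variable {V : Type*} {G : SimpleGraph V}

/-- Vertices reachable from `a` by a walk avoiding `S` entirely. -/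
def reachAvoid (G : SimpleGraph V) (S : Set V) (a : V) : Set V :=
  {x | ∃ p : G.Walk a x, ∀ v ∈ p.support, v ∉ S}

lemma self_mem_reachAvoid {S : Set V} {a : V} (ha : a ∉ S) : a ∈ G.reachAvoid S a :=
  ⟨Walk.nil, by simpa using ha⟩

lemma reachAvoid_disjoint {S : Set V} {a x : V} (hx : x ∈ G.reachAvoid S a) : x ∉ S := by
  obtain ⟨p, hp⟩ := hx
  exact hp x p.end_mem_support

lemma reachAvoid_adj {S : Set V} {a x w : V} (hx : x ∈ G.reachAvoid S a)
    (hadj : G.Adj x w) (hw : w ∉ S) : w ∈ G.reachAvoid S a := by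
  obtain ⟨p, hp⟩ := hx
  refine ⟨p.concat hadj, ?_⟩
  intro v hv
  rw [Walk.support_concat, List.mem_append] at hv
  rcases hv with hv | hv
  · exact hp v hv
  · simp only [List.mem_singleton] at hv
    exact hv ▸ hw

lemma reachAvoid_support {S : Set V} {a x : V} (p : G.Walk a x)
    (hp : ∀ v ∈ p.support, v ∉ S) : ∀ v ∈ p.support, v ∈ G.reachAvoid S a := by
  classical
  intro v hv
  exact ⟨p.takeUntil v hv, fun u hu => hp u (p.support_takeUntil_subset hv hu)⟩

lemma reachAvoid_connect {S : Set V} {a x y : V} (hx : x ∈ G.reachAvoid S a)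
    (hy : y ∈ G.reachAvoid S a) :
    ∃ r : G.Walk x y, ∀ v ∈ r.support, v ∈ G.reachAvoid S a := by
  obtain ⟨p, hp⟩ := hx
  obtain ⟨q, hq⟩ := hy
  refine ⟨p.reverse.append q, ?_⟩
  intro v hv
  rw [Walk.mem_support_append_iff] at hv
  rcases hv with hv | hv
  · rw [Walk.support_reverse, List.mem_reverse] at hv
    exact reachAvoid_support p hp v hv
  · exact reachAvoid_support q hq v hv

lemma reachAvoid_sep_fail {a b s : V} {S : Set V}
    (hb : b ∉ G.reachAvoid S a)
    (hs : ∀ u ∈ G.reachAvoid S a, ¬ G.Adj s u) :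
    ∀ {c : V} (p : G.Walk c b), c ∈ G.reachAvoid S a →
      ∃ t ∈ S, t ≠ s ∧ t ∈ p.support := by
  intro c p
  induction p with
  | nil => intro hc; exact absurd hc hb
  | @cons c d b h q ih =>
    intro hc
    by_cases hd : d ∈ S
    · refine ⟨d, hd, ?_, by simp⟩
      intro hds
      exact hs c hc (hds ▸ h.symm)
    · obtain ⟨t, ht, hts, htp⟩ := ih hb (reachAvoid_adj hc h hd)
      exact ⟨t, ht, hts, by simp [htp]⟩

lemma Chordal.induce {G : SimpleGraph V} (h : G.Chordal) (W : Set V) :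
    (G.induce W).Chordal := by
  intro n hn hc
  obtain ⟨f, hinj, hiff⟩ := hc
  refine h n hn ⟨fun i => ↑(f i), Subtype.val_injective.comp hinj, fun i j => ?_⟩
  rw [← hiff i j]
  simp [SimpleGraph.comap_adj]

/-- The key step for Dirac's theorem: a simplicial vertex on the `a`-side of a
minimal separator whose separator is a clique. -/
lemma exists_simplicial_in_side {V : Type u} [Fintype V] {G : SimpleGraph V} {N : ℕ}
    (IH : ∀ {W : Type u} [Fintype W] (H : SimpleGraph W), H.Chordal → Fintype.card W ≤ N →
      ((∀ a b : W, a ≠ b → ¬ H.Adj a b → ∃ x y : W, x ≠ y ∧ ¬ H.Adj x y ∧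
        H.IsClique (H.neighborSet x) ∧ H.IsClique (H.neighborSet y)) ∧
       (Nonempty W → ∃ v : W, H.IsClique (H.neighborSet v))))
    (hG : G.Chordal) (hcard : Fintype.card V ≤ N + 1)
    {a b : V} {S : Set V} (haS : a ∉ S) (hbS : b ∉ S)
    (hsep : ∀ p : G.Walk a b, ∃ s ∈ S, s ∈ p.support)
    (hScl : G.IsClique S) :
    ∃ x, x ∈ G.reachAvoid S a ∧ G.IsClique (G.neighborSet x) := by
  classical
  set A := G.reachAvoid S a with hA
  have haA : a ∈ A := self_mem_reachAvoid haS
  have hbA : b ∉ A := by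
    rintro ⟨p, hp⟩
    obtain ⟨s, hsS, hsp⟩ := hsep p
    exact hp s hsp hsS
  set W : Set V := A ∪ S with hW
  have hbW : b ∉ W := by
    rintro (h | h)
    · exact hbA h
    · exact hbS h
  have hNW : ∀ v ∈ A, ∀ w, G.Adj v w → w ∈ W := by
    intro v hv w hadj
    by_cases hw : w ∈ S
    · exact Or.inr hw
    · exact Or.inl (reachAvoid_adj hv hadj hw)
  have hcardW : Fintype.card ↥W ≤ N := by
    have : Fintype.card ↥W < Fintype.card V :=
      Fintype.card_lt_of_injective_of_notMem (Subtype.val) Subtype.val_injective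
        (by simpa using hbW)
    omega
  set H := G.induce W with hH
  have hHchordal : H.Chordal := hG.induce W
  by_cases hcmp : ∀ u w : ↥W, u ≠ w → H.Adj u w
  · refine ⟨a, haA, ?_⟩
    intro u hu w hw huw
    have huW : u ∈ W := hNW a haA u hu
    have hwW : w ∈ W := hNW a haA w hw
    have := hcmp ⟨u, huW⟩ ⟨w, hwW⟩ (by simpa using huw)
    simpa [hH] using this
  · push_neg at hcmp
    obtain ⟨u, w, huw, hnadj⟩ := hcmp
    obtain ⟨x', y', hxy', hnadj', hx's, hy's⟩ := (IH H hHchordal hcardW).1 u w huw hnadj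
    have hvals : (x' : V) ≠ (y' : V) := fun h => hxy' (Subtype.val_injective h)
    have hnotboth : (x' : V) ∈ A ∨ (y' : V) ∈ A := by
      by_contra hcon
      push_neg at hcon
      have hx'S : (x' : V) ∈ S := x'.2.resolve_left hcon.1
      have hy'S : (y' : V) ∈ S := y'.2.resolve_left hcon.2
      exact hnadj' (by simpa [hH] using hScl hx'S hy'S hvals)
    have key : ∀ z : ↥W, (z : V) ∈ A → H.IsClique (H.neighborSet z) →
        G.IsClique (G.neighborSet (z : V)) := by
      intro z hzA hzcl
      intro u hu w hw huw
      have huW : u ∈ W := hNW z hzA u hu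
      have hwW : w ∈ W := hNW z hzA w hw
      have hu' : (⟨u, huW⟩ : ↥W) ∈ H.neighborSet z := by simpa [hH] using hu
      have hw' : (⟨w, hwW⟩ : ↥W) ∈ H.neighborSet z := by simpa [hH] using hw
      have := hzcl hu' hw' (by simpa using huw)
      simpa [hH] using this
    rcases hnotboth with h | h
    · exact ⟨x', h, key x' h hx's⟩
    · exact ⟨y', h, key y' h hy's⟩

end SimpleGraph
namespace SimpleGraph

universe u

/-- Dirac's theorem: a finite chordal graph has a simplicial vertex; moreover if it is not
complete, it has two nonadjacent simplicial vertices. -/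
lemma dirac : ∀ (N : ℕ), ∀ {V : Type u} [Fintype V] (G : SimpleGraph V), G.Chordal →
    Fintype.card V ≤ N →
    ((∀ a b : V, a ≠ b → ¬ G.Adj a b → ∃ x y : V, x ≠ y ∧ ¬ G.Adj x y ∧
        G.IsClique (G.neighborSet x) ∧ G.IsClique (G.neighborSet y)) ∧
     (Nonempty V → ∃ v : V, G.IsClique (G.neighborSet v))) := by
  intro N
  induction N with
  | zero =>
    intro V _ G hG hcard
    have hemp : IsEmpty V := by rwa [← Fintype.card_eq_zero_iff, ← Nat.le_zero]
    exact ⟨fun a => (hemp.false a).elim, fun ⟨v⟩ => (hemp.false v).elim⟩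
  | succ N IH =>
    intro V _ G hG hcard
    have main : ∀ a b : V, a ≠ b → ¬ G.Adj a b → ∃ x y : V, x ≠ y ∧ ¬ G.Adj x y ∧
        G.IsClique (G.neighborSet x) ∧ G.IsClique (G.neighborSet y) := by
      intro a b hab hnadj
      classical
      set L : Set ℕ := {k | ∃ T : Set V,
        (a ∉ T ∧ b ∉ T ∧ ∀ p : G.Walk a b, ∃ s ∈ T, s ∈ p.support) ∧ T.ncard = k} with hL
      have hL0 : L.Nonempty := by
        refine ⟨({a, b}ᶜ : Set V).ncard, ({a, b}ᶜ : Set V), ⟨by simp, by simp, ?_⟩, rfl⟩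
        intro p
        have hlen : 0 < p.length := by
          rcases Nat.eq_zero_or_pos p.length with h | h
          · exact absurd (Walk.eq_of_length_eq_zero h) hab
          · exact h
        have hadj1 := p.adj_getVert_succ (i := 0) hlen
        rw [p.getVert_zero] at hadj1
        refine ⟨p.getVert 1, ?_, p.getVert_mem_support' 1⟩
        simp only [Set.mem_compl_iff, Set.mem_insert_iff, Set.mem_singleton_iff]
        push_neg
        constructor
        · intro h; exact G.irrefl (h ▸ hadj1)
        · intro h; exact hnadj (h ▸ hadj1)
      obtain ⟨S, ⟨haS, hbS, hsepS⟩, hScard⟩ :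
          ∃ S : Set V, (a ∉ S ∧ b ∉ S ∧ ∀ p : G.Walk a b, ∃ s ∈ S, s ∈ p.support) ∧
            S.ncard = sInf L := Nat.sInf_mem hL0
      have hmin : ∀ T : Set V,
          (a ∉ T ∧ b ∉ T ∧ ∀ p : G.Walk a b, ∃ s ∈ T, s ∈ p.support) → S.ncard ≤ T.ncard :=
        fun T hT => hScard ▸ Nat.sInf_le ⟨T, hT, rfl⟩
      set A := G.reachAvoid S a with hA
      set B := G.reachAvoid S b with hB
      have hbA : b ∉ A := by
        rintro ⟨p, hp⟩
        obtain ⟨s, hsS, hsp⟩ := hsepS p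
        exact hp s hsp hsS
      have hsep' : ∀ p : G.Walk b a, ∃ s ∈ S, s ∈ p.support := by
        intro p
        obtain ⟨s, h1, h2⟩ := hsepS p.reverse
        exact ⟨s, h1, by rwa [Walk.support_reverse, List.mem_reverse] at h2⟩
      have haB : a ∉ B := by
        rintro ⟨p, hp⟩
        obtain ⟨s, hsS, hsp⟩ := hsep' p
        exact hp s hsp hsS
      have hAB : ∀ x, x ∈ A → x ∉ B := by
        rintro x ⟨p, hp⟩ ⟨q, hq⟩
        obtain ⟨s, hsS, hsp⟩ := hsepS (p.append q.reverse)
        rw [Walk.mem_support_append_iff] at hsp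
        rcases hsp with h | h
        · exact hp s h hsS
        · rw [Walk.support_reverse, List.mem_reverse] at h
          exact hq s h hsS
      have hedge : ∀ x ∈ A, ∀ y ∈ B, ¬ G.Adj x y := by
        intro x hx y hy hadj
        exact hAB y (reachAvoid_adj hx hadj (reachAvoid_disjoint hy)) hy
      have hnbrA : ∀ s ∈ S, ∃ u ∈ A, G.Adj s u := by
        intro s hsS
        by_contra hcon
        push_neg at hcon
        have hSep' : a ∉ S \ {s} ∧ b ∉ S \ {s} ∧
            ∀ p : G.Walk a b, ∃ t ∈ S \ {s}, t ∈ p.support := by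
          refine ⟨fun h => haS h.1, fun h => hbS h.1, ?_⟩
          intro p
          obtain ⟨t, htS, hts, htp⟩ :=
            reachAvoid_sep_fail hbA (fun u hu hadj => hcon u hu hadj) p
              (self_mem_reachAvoid haS)
          exact ⟨t, ⟨htS, by simpa using hts⟩, htp⟩
        have hlt : (S \ {s}).ncard < S.ncard :=
          Set.ncard_diff_singleton_lt_of_mem hsS (Set.toFinite S)
        have := hmin _ hSep'
        omega
      have hnbrB : ∀ s ∈ S, ∃ u ∈ B, G.Adj s u := by
        intro s hsS
        by_contra hcon
        push_neg at hcon
        have hSep' : a ∉ S \ {s} ∧ b ∉ S \ {s} ∧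
            ∀ p : G.Walk a b, ∃ t ∈ S \ {s}, t ∈ p.support := by
          refine ⟨fun h => haS h.1, fun h => hbS h.1, ?_⟩
          intro p
          obtain ⟨t, htS, hts, htp⟩ :=
            reachAvoid_sep_fail haB (fun u hu hadj => hcon u hu hadj) p.reverse
              (self_mem_reachAvoid hbS)
          refine ⟨t, ⟨htS, by simpa using hts⟩, ?_⟩
          rwa [Walk.support_reverse, List.mem_reverse] at htp
        have hlt : (S \ {s}).ncard < S.ncard :=
          Set.ncard_diff_singleton_lt_of_mem hsS (Set.toFinite S)
        have := hmin _ hSep'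
        omega
      -- S is a clique
      have hScl : G.IsClique S := by
        intro x hxS y hyS hxy
        by_contra hnad
        obtain ⟨u, huA, hxu⟩ := hnbrA x hxS
        obtain ⟨u', hu'A, hyu'⟩ := hnbrA y hyS
        obtain ⟨w1, hw1⟩ := reachAvoid_connect huA hu'A
        obtain ⟨uB, huBB, hxuB⟩ := hnbrB x hxS
        obtain ⟨uB', huB'B, hyuB'⟩ := hnbrB y hyS
        obtain ⟨w2, hw2⟩ := reachAvoid_connect huBB huB'B
        have hp₀ : ∀ v ∈ (Walk.cons hxu (w1.concat hyu'.symm)).support,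
            v ∈ {v : V | v = x ∨ v = y ∨ v ∈ A} := by
          intro v hv
          simp only [Walk.support_cons, List.mem_cons] at hv
          rcases hv with rfl | hv
          · exact Or.inl rfl
          · rw [Walk.support_concat, List.mem_append] at hv
            rcases hv with hv | hv
            · exact Or.inr (Or.inr (hw1 v hv))
            · exact Or.inr (Or.inl (by simpa using hv))
        obtain ⟨p, hpQ, hppath, hpc⟩ := exists_induced_path_in _ _ hp₀
        have hq₀ : ∀ v ∈ (Walk.cons hxuB (w2.concat hyuB'.symm)).support,
            v ∈ {v : V | v = x ∨ v = y ∨ v ∈ B} := by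
          intro v hv
          simp only [Walk.support_cons, List.mem_cons] at hv
          rcases hv with rfl | hv
          · exact Or.inl rfl
          · rw [Walk.support_concat, List.mem_append] at hv
            rcases hv with hv | hv
            · exact Or.inr (Or.inr (hw2 v hv))
            · exact Or.inr (Or.inl (by simpa using hv))
        obtain ⟨q, hqQ, hqpath, hqc⟩ := exists_induced_path_in _ _ hq₀
        have hintp : ∀ i, 0 < i → i < p.length → p.getVert i ∈ A := by
          intro i h1 h2
          rcases hpQ _ (p.getVert_mem_support' i) with h | h | h
          · exfalso
            have heq : p.getVert i = p.getVert 0 := by rw [p.getVert_zero]; exact h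
            have := hppath.getVert_inj (by omega) (by omega) heq
            omega
          · exfalso
            have heq : p.getVert i = p.getVert p.length := by rw [p.getVert_length]; exact h
            have := hppath.getVert_inj (by omega) (le_refl _) heq
            omega
          · exact h
        have hintq : ∀ i, 0 < i → i < q.length → q.getVert i ∈ B := by
          intro i h1 h2
          rcases hqQ _ (q.getVert_mem_support' i) with h | h | h
          · exfalso
            have heq : q.getVert i = q.getVert 0 := by rw [q.getVert_zero]; exact h
            have := hqpath.getVert_inj (by omega) (by omega) heq
            omega
          · exfalso
            have heq : q.getVert i = q.getVert q.length := by rw [q.getVert_length]; exact h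
            have := hqpath.getVert_inj (by omega) (le_refl _) heq
            omega
          · exact h
        have two_le : ∀ r : G.Walk x y, 2 ≤ r.length := by
          intro r
          by_contra hcon
          push_neg at hcon
          have hcon2 : r.length = 0 ∨ r.length = 1 := by omega
          rcases hcon2 with h | h
          · exact hxy (Walk.eq_of_length_eq_zero h)
          · have hadj1 := r.adj_getVert_succ (i := 0) (by omega)
            rw [r.getVert_zero] at hadj1
            have : r.getVert 1 = y := by rw [← h]; exact r.getVert_length
            exact hnad (this ▸ hadj1)
        have hdisj : ∀ i j, 0 < i → i < p.length → 0 < j → j < q.length →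
            p.getVert i ≠ q.getVert j := by
          intro i j h1 h2 h3 h4 h
          exact hAB _ (hintp i h1 h2) (h ▸ hintq j h3 h4)
        have hnadjc : ∀ i j, 0 < i → i < p.length → 0 < j → j < q.length →
            ¬ G.Adj (p.getVert i) (q.getVert j) := by
          intro i j h1 h2 h3 h4
          exact hedge _ (hintp i h1 h2) _ (hintq j h3 h4)
        exact hG (p.length + q.length) (by have := two_le p; have := two_le q; omega)
          (hasInducedCycle_of_two_paths p q hppath hqpath (two_le p) (two_le q) hnad
            hpc hqc hdisj hnadjc)
      obtain ⟨x, hxA, hxcl⟩ := exists_simplicial_in_side @IH hG hcard haS hbS hsepS hScl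
      obtain ⟨y, hyB, hycl⟩ := exists_simplicial_in_side @IH hG hcard hbS haS hsep' hScl
      exact ⟨x, y, fun h => hAB x hxA (h ▸ hyB), fun h => hedge x hxA y hyB h, hxcl, hycl⟩
    refine ⟨main, ?_⟩
    rintro ⟨v⟩
    by_cases hcmp : ∀ u w : V, u ≠ w → G.Adj u w
    · exact ⟨v, fun u hu w hw huw => hcmp u w huw⟩
    · push_neg at hcmp
      obtain ⟨u, w, h1, h2⟩ := hcmp
      obtain ⟨x, _, _, _, hx, _⟩ := main u w h1 h2
      exact ⟨x, hx⟩

end SimpleGraph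
namespace SimpleGraph

variable {V : Type*} {G : SimpleGraph V}

lemma isClique_image {W : Set V} {D : Set ↥W} (hD : (G.induce W).IsClique D) :
    G.IsClique (Subtype.val '' D) := by
  rintro _ ⟨d1, hd1, rfl⟩ _ ⟨d2, hd2, rfl⟩ hne
  have := hD hd1 hd2 (fun h => hne (congrArg Subtype.val h))
  simpa using this

lemma isClique_preimage {W : Set V} {C : Set V} (hC : G.IsClique C) :
    (G.induce W).IsClique (Subtype.val ⁻¹' C) := by
  rintro ⟨u, hu⟩ h1 ⟨w, hw⟩ h2 hne
  have : G.Adj u w := hC h1 h2 (fun h => hne (Subtype.ext h))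
  simpa using this

lemma image_preimage_val {W : Set V} {C : Set V} (hCW : C ⊆ W) :
    Subtype.val '' (Subtype.val ⁻¹' C : Set ↥W) = C := by
  rw [Set.image_preimage_eq_inter_range, Subtype.range_coe]
  exact Set.inter_eq_self_of_subset_left hCW

lemma maximal_preimage {W : Set V} {C : Set V} (hC : Maximal G.IsClique C) (hCW : C ⊆ W) :
    Maximal (G.induce W).IsClique (Subtype.val ⁻¹' C) := by
  constructor
  · exact isClique_preimage hC.1
  · intro D hD hsub
    have h1 : C ⊆ Subtype.val '' D := by
      rw [← image_preimage_val hCW]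
      exact Set.image_mono hsub
    have h2 : Subtype.val '' D ⊆ C := hC.2 (isClique_image hD) h1
    intro d hd
    have : (d : V) ∈ C := h2 ⟨d, hd, rfl⟩
    exact this

universe u

lemma count_maximal_cliques : ∀ (N : ℕ), ∀ {V : Type u} [Fintype V] (G : SimpleGraph V),
    G.Chordal → Fintype.card V ≤ N → ∀ F : Set V, Maximal G.IsClique F →
    numMaximalCliques G + F.ncard ≤ Fintype.card V + 1 := by
  intro N
  induction N with
  | zero =>
    intro V _ G hG hcard F hF
    have hemp : IsEmpty V := by rwa [← Fintype.card_eq_zero_iff, ← Nat.le_zero]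
    have hF0 : F.ncard = 0 := by
      rw [Set.eq_empty_of_isEmpty F]; exact Set.ncard_empty _
    have h1 : numMaximalCliques G ≤ 1 := by
      unfold numMaximalCliques
      refine le_trans (Set.ncard_le_ncard ?_ (Set.toFinite _)) (le_of_eq (Set.ncard_singleton ∅))
      intro s _
      simp [Set.eq_empty_of_isEmpty s]
    omega
  | succ N IH =>
    intro V _ G hG hcard F hF
    classical
    rcases isEmpty_or_nonempty V with hemp | hne
    · have hF0 : F.ncard = 0 := by
        rw [Set.eq_empty_of_isEmpty F]; exact Set.ncard_empty _
      have h1 : numMaximalCliques G ≤ 1 := by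
        unfold numMaximalCliques
        refine le_trans (Set.ncard_le_ncard ?_ (Set.toFinite _)) (le_of_eq (Set.ncard_singleton ∅))
        intro s _
        simp [Set.eq_empty_of_isEmpty s]
      omega
    · -- get a simplicial vertex
      obtain ⟨v, hv⟩ := ((dirac (N + 1) G hG hcard).2) hne
      set W : Set V := {v}ᶜ with hW
      haveI : Fintype ↥W := Fintype.ofFinite _
      set H := G.induce W with hH
      have hHchordal : H.Chordal := hG.induce W
      have hWcard : Fintype.card ↥W = Fintype.card V - 1 := by
        rw [Fintype.card_eq_nat_card, Nat.card_coe_set_eq, hW, Set.compl_eq_univ_diff,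
          Set.ncard_diff (Set.subset_univ _), Set.ncard_univ, Set.ncard_singleton,
          Nat.card_eq_fintype_card]
      have hVpos : 1 ≤ Fintype.card V := Fintype.card_pos
      have hWle : Fintype.card ↥W ≤ N := by omega
      -- the closed neighborhood is a clique
      have hNv : G.IsClique (insert v (G.neighborSet v)) := by
        refine hv.insert ?_
        intro b hb _
        exact hb
      have huniq : ∀ C : Set V, Maximal G.IsClique C → v ∈ C →
          C = insert v (G.neighborSet v) := by
        intro C hC hvC
        have hsub : C ⊆ insert v (G.neighborSet v) := by
          intro u hu
          by_cases h : u = v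
          · exact h ▸ Set.mem_insert _ _
          · exact Set.mem_insert_iff.2 (Or.inr (hC.1 hvC hu (fun he => h he.symm)))
        exact Set.Subset.antisymm hsub (hC.2 hNv hsub)
      have hvnbr : v ∉ G.neighborSet v := fun h => G.irrefl h
      set M : Set (Set V) := {s | Maximal G.IsClique s} with hM
      set MH : Set (Set ↥W) := {s | Maximal H.IsClique s} with hMH
      set Φ : Set V → Set ↥W := fun C => Subtype.val ⁻¹' (C \ {v}) with hΦ
      have hsubW : ∀ C : Set V, C \ {v} ⊆ W := by
        intro C u hu
        simpa [hW] using hu.2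
      have himg : ∀ C : Set V, Subtype.val '' (Φ C) = C \ {v} :=
        fun C => image_preimage_val (hsubW C)
      have hΦinj : Set.InjOn Φ M := by
        intro C hC D hD hCD
        have hdiff : C \ {v} = D \ {v} := by rw [← himg C, ← himg D, hCD]
        by_cases hvC : v ∈ C <;> by_cases hvD : v ∈ D
        · rw [huniq C hC hvC, huniq D hD hvD]
        · exfalso
          have h1 : D ⊆ C := by
            rw [Set.diff_singleton_eq_self hvD] at hdiff
            rw [← hdiff]
            exact Set.diff_subset
          exact hvD (hD.2 hC.1 h1 hvC)
        · exfalso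
          have h1 : C ⊆ D := by
            rw [Set.diff_singleton_eq_self hvC] at hdiff
            rw [hdiff]
            exact Set.diff_subset
          exact hvC (hC.2 hD.1 h1 hvD)
        · rw [← Set.diff_singleton_eq_self hvC, ← Set.diff_singleton_eq_self hvD, hdiff]
      have hΦnot : ∀ C ∈ M, v ∉ C → Φ C ∈ MH := by
        intro C hC hvC
        have : Φ C = Subtype.val ⁻¹' C := by rw [hΦ]; simp [Set.diff_singleton_eq_self hvC]
        rw [hMH, Set.mem_setOf_eq, this]
        exact maximal_preimage hC (fun u hu => by
          simp only [hW, Set.mem_compl_iff, Set.mem_singleton_iff]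
          intro he
          exact hvC (he ▸ hu))
      have hsplit : numMaximalCliques G ≤ 1 + MH.ncard := by
        have hMeq : M ⊆ {C ∈ M | v ∈ C} ∪ {C ∈ M | v ∉ C} := by
          intro C hC
          by_cases h : v ∈ C
          · exact Or.inl ⟨hC, h⟩
          · exact Or.inr ⟨hC, h⟩
        have h1 : {C ∈ M | v ∈ C}.ncard ≤ 1 := by
          refine le_trans (Set.ncard_le_ncard ?_ (Set.toFinite _))
            (le_of_eq (Set.ncard_singleton (insert v (G.neighborSet v))))
          rintro C ⟨hC, hvC⟩
          exact huniq C hC hvC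
        have h2 : {C ∈ M | v ∉ C}.ncard ≤ MH.ncard := by
          refine Set.ncard_le_ncard_of_injOn Φ ?_ ?_ (Set.toFinite _)
          · rintro C ⟨hC, hvC⟩
            exact hΦnot C hC hvC
          · exact hΦinj.mono (fun C hC => hC.1)
        calc numMaximalCliques G = M.ncard := rfl
          _ ≤ ({C ∈ M | v ∈ C} ∪ {C ∈ M | v ∉ C}).ncard :=
              Set.ncard_le_ncard hMeq (Set.toFinite _)
          _ ≤ {C ∈ M | v ∈ C}.ncard + {C ∈ M | v ∉ C}.ncard :=
              Set.ncard_union_le _ _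
          _ ≤ 1 + MH.ncard := by omega
      have hMHnum : numMaximalCliques H = MH.ncard := rfl
      by_cases hvF : v ∈ F
      · -- F is the closed neighbourhood of v
        have hFeq : F = insert v (G.neighborSet v) := huniq F hF hvF
        have hFpos : 1 ≤ F.ncard := (Set.ncard_pos (Set.toFinite F)).2 ⟨v, hvF⟩
        have hFdiff : (F \ {v}).ncard = F.ncard - 1 := by
          have := Set.ncard_diff_singleton_add_one hvF (Set.toFinite F)
          omega
        set Fq : Set ↥W := Subtype.val ⁻¹' (F \ {v}) with hFq
        have hFqcard : Fq.ncard = F.ncard - 1 := by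
          have h0 : Subtype.val '' Fq = F \ {v} := himg F
          have h1 := Set.ncard_image_of_injective Fq Subtype.val_injective
          rw [h0] at h1
          rw [← h1]
          exact hFdiff
        have hFqclique : H.IsClique Fq := isClique_preimage (hF.1.subset Set.diff_subset)
        obtain ⟨F', hsub', hF'⟩ := Finite.exists_le_maximal hFqclique
        rcases lt_or_eq_of_le hsub' with hss | heq
        · -- strictly bigger maximal clique on the other side
          have hcard' : F.ncard ≤ F'.ncard := by
            have := Set.ncard_lt_ncard hss (Set.toFinite _)
            omega
          have := IH H hHchordal hWle F' hF'
          omega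
        · -- Fq itself is maximal: inject all maximal cliques
          have hFqmax : Maximal H.IsClique Fq := by rw [heq]; exact hF'
          have hinj : numMaximalCliques G ≤ MH.ncard := by
            refine Set.ncard_le_ncard_of_injOn Φ ?_ hΦinj (Set.toFinite _)
            intro C hC
            by_cases h : v ∈ C
            · have : Φ C = Fq := by
                rw [hΦ, hFq, huniq C hC h, hFeq]
              rw [hMH, Set.mem_setOf_eq, this]
              exact hFqmax
            · exact hΦnot C hC h
          have := IH H hHchordal hWle Fq hFqmax
          omega
      · -- F lives in W
        have hFW : F ⊆ W := by
          intro u hu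
          simp only [hW, Set.mem_compl_iff, Set.mem_singleton_iff]
          intro he
          exact hvF (he ▸ hu)
        have hF' : Maximal H.IsClique (Subtype.val ⁻¹' F) := maximal_preimage hF hFW
        have hFcard' : (Subtype.val ⁻¹' F : Set ↥W).ncard = F.ncard := by
          have h1 := Set.ncard_image_of_injective (Subtype.val ⁻¹' F : Set ↥W)
            Subtype.val_injective
          rw [image_preimage_val hFW] at h1
          exact h1.symm
        have := IH H hHchordal hWle _ hF'
        omega

end SimpleGraph

/-- Let `G` be a chordal graph on `n` vertices which has a maximal clique with `t + 1`
vertices for some `t ≥ 1`.  Then `c(G) ≤ n - t`. -/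
theorem maximal_clique_count_le_of_chordal {V : Type*} [Fintype V] (G : SimpleGraph V)
    (hG : G.Chordal) (n t : ℕ) (hn : Fintype.card V = n) (ht : 1 ≤ t) (F : Set V)
    (hF : Maximal (fun s => G.IsClique s) F) (hFcard : F.ncard = t + 1) :
    numMaximalCliques G ≤ n - t := by
  have := SimpleGraph.count_maximal_cliques (Fintype.card V) G hG le_rfl F hF
  omega
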